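/- (Exponential barrier for large z under P₂-type operator.) Let μ > 0 be small and define φ(x,z) = e^{−μz²/(x+1)}. Suppose coefficients satisfy |b̃(x,y,z)| ≤ C, 0 < u_n/u_{n-1}² ≤ C', |(−∂_z u_n)/u_{n-1}² + u_n ∂_z u_{n-1}/u_{n-1}³| ≤ C''. Then there exists N > 0 (depending only on μ, C, C', C'') such that for all z > N, x ∈ (0,X], the operator P₁φ = ∂_xφ − b̃∂_zφ − (u_n/u_{n-1}²)∂_z²φ + ((−∂_z u_n)/u_{n-1}² + u_n∂_z u_{n-1}/u_{n-1}³)∂_zφ satisfies P₁φ ≥ (1/2)·(z²/(x+1)²)·μ·φ > 0, provided μ ≤ μ₀(C'). -/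

import Mathlib

open Real

/-- Partial derivative of a two-variable function in the first (x) variable. -/
noncomputable def pdx (f : ℝ → ℝ → ℝ) (x z : ℝ) : ℝ := deriv (fun t => f t z) x

/-- Partial derivative of a two-variable function in the second (z) variable. -/
noncomputable def pdz (f : ℝ → ℝ → ℝ) (x z : ℝ) : ℝ := deriv (fun t => f x t) z

/-- Partial derivative of a three-variable function in the third (z) variable. -/
noncomputable def pd3 (f : ℝ → ℝ → ℝ → ℝ) (x y z : ℝ) : ℝ := deriv (fun t => f x y t) z

/-- The exponential barrier `φ(x,z) = e^{−μz²/(x+1)}`. -/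
noncomputable def phiB (μ x z : ℝ) : ℝ := Real.exp (-μ * z ^ 2 / (x + 1))

/-- The operator `P₁` of Lemma 6.5 applied to the barrier `φ`:
`P₁φ = ∂_xφ − b̃∂_zφ − (uₙ/u₁²)∂_z²φ + ((−∂_z uₙ)/u₁² + uₙ∂_z u₁/u₁³)∂_zφ`. -/
noncomputable def P1phi (bt un u1 : ℝ → ℝ → ℝ → ℝ) (μ x y z : ℝ) : ℝ :=
  pdx (phiB μ) x z
    - bt x y z * pdz (phiB μ) x z
    - (un x y z / (u1 x y z) ^ 2) * pdz (fun x' z' => pdz (phiB μ) x' z') x z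
    + ((-(pd3 un x y z)) / (u1 x y z) ^ 2
        + un x y z * pd3 u1 x y z / (u1 x y z) ^ 3) * pdz (phiB μ) x z

lemma hdz (μ x z : ℝ) : HasDerivAt (fun t => phiB μ x t) ((-(2*μ)*z/(x+1)) * phiB μ x z) z := by
  have h : HasDerivAt (fun t : ℝ => -μ * t^2 / (x+1)) (-(2*μ)*z/(x+1)) z := by
    have := ((hasDerivAt_pow 2 z).const_mul (-μ)).div_const (x+1)
    exact this.congr_deriv (by push_cast; ring)
  have := h.exp
  simpa [phiB, mul_comm] using this

lemma pdz_phiB (μ x z : ℝ) : pdz (phiB μ) x z = (-(2*μ)*z/(x+1)) * phiB μ x z := by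
  unfold pdz; exact (hdz μ x z).deriv

lemma pdx_phiB (μ x z : ℝ) (hx : x + 1 ≠ 0) :
    pdx (phiB μ) x z = (μ * z^2 / (x+1)^2) * phiB μ x z := by
  have h1 : HasDerivAt (fun t : ℝ => t + 1) 1 x := (hasDerivAt_id x).add_const 1
  have h2 : HasDerivAt (fun t : ℝ => ((t+1):ℝ)⁻¹) (-1 / (x+1)^2) x := by
    exact h1.inv hx
  have h4 := (h2.const_mul (-μ * z^2)).exp
  have heq : (fun t => phiB μ t z) = fun t => Real.exp (-μ*z^2 * (t+1)⁻¹) := by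
    funext t; simp [phiB, div_eq_mul_inv]
  have : pdx (phiB μ) x z = Real.exp (-μ*z^2*(x+1)⁻¹) * (-μ*z^2 * (-1/(x+1)^2)) := by
    unfold pdx; rw [heq]; exact h4.deriv
  rw [this, phiB, div_eq_mul_inv]
  ring

lemma pdzz_phiB (μ x z : ℝ) (hx : x + 1 ≠ 0) :
    pdz (fun x' z' => pdz (phiB μ) x' z') x z
      = ((4*μ^2*z^2/(x+1)^2) - 2*μ/(x+1)) * phiB μ x z := by
  have heq : (fun t : ℝ => pdz (phiB μ) x t) = fun t => ((-(2*μ))*t/(x+1)) * phiB μ x t := by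
    funext t; exact pdz_phiB μ x t
  have hlin : HasDerivAt (fun t : ℝ => ((-(2*μ))*t/(x+1))) ((-(2*μ))/(x+1)) z := by
    simpa using ((hasDerivAt_id z).const_mul (-(2*μ))).div_const (x+1)
  have hp := hlin.mul (hdz μ x z)
  have h5 : pdz (fun x' z' => pdz (phiB μ) x' z') x z
      = (-(2*μ))/(x+1) * phiB μ x z + ((-(2*μ))*z/(x+1)) * ((-(2*μ)*z/(x+1)) * phiB μ x z) := by
    show deriv (fun t => pdz (phiB μ) x t) z = _
    rw [heq]; exact hp.deriv
  rw [h5]; field_simp; ring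


/-- Lemma 6.5 of the paper: for `μ` small (depending only on `C'`) there is
`N > 0` with `P₁φ ≥ (1/2)(z²/(x+1)²)μφ > 0` for `z > N`, `x ∈ (0,X]`. -/
theorem exponential_barrier_large_z
    (X C C' C'' : ℝ) (bt un u1 : ℝ → ℝ → ℝ → ℝ)
    (hX : 0 < X)
    (hb : ∀ x y z, 0 < x → x ≤ X → 0 < z → |bt x y z| ≤ C)
    (hquot_pos : ∀ x y z, 0 < x → x ≤ X → 0 < z →
      0 < un x y z / (u1 x y z) ^ 2)
    (hquot_le : ∀ x y z, 0 < x → x ≤ X → 0 < z →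
      un x y z / (u1 x y z) ^ 2 ≤ C')
    (hcoef : ∀ x y z, 0 < x → x ≤ X → 0 < z →
      |(-(pd3 un x y z)) / (u1 x y z) ^ 2
        + un x y z * pd3 u1 x y z / (u1 x y z) ^ 3| ≤ C'') :
    ∃ μ₀ > (0:ℝ), ∀ μ, 0 < μ → μ ≤ μ₀ →
      ∃ N > (0:ℝ), ∀ x y z, 0 < x → x ≤ X → N < z →
        (1 / 2) * (z ^ 2 / (x + 1) ^ 2) * μ * phiB μ x z ≤ P1phi bt un u1 μ x y z ∧
        0 < P1phi bt un u1 μ x y z := by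
  have hC' : 0 < C' := lt_of_lt_of_le (hquot_pos X 0 1 hX le_rfl one_pos)
    (hquot_le X 0 1 hX le_rfl one_pos)
  have hC : 0 ≤ C := le_trans (abs_nonneg _) (hb X 0 1 hX le_rfl one_pos)
  have hC'' : 0 ≤ C'' := le_trans (abs_nonneg _) (hcoef X 0 1 hX le_rfl one_pos)
  refine ⟨1/(16*C'), by positivity, fun μ hμ hμ0 => ?_⟩
  refine ⟨8*(C+C''+1)*(X+1), by positivity, fun x y z hx hxX hz => ?_⟩
  have hz0 : 0 < z := lt_trans (by positivity) hz
  have hx1 : (0:ℝ) < x + 1 := by linarith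
  have hx1' : x + 1 ≠ 0 := ne_of_gt hx1
  set b := bt x y z with hbdef
  set q := un x y z / (u1 x y z) ^ 2 with hqdef
  set a := (-(pd3 un x y z)) / (u1 x y z) ^ 2
        + un x y z * pd3 u1 x y z / (u1 x y z) ^ 3 with hadef
  have hqpos : 0 < q := hquot_pos x y z hx hxX hz0
  have hqle : q ≤ C' := hquot_le x y z hx hxX hz0
  have hbb : -C ≤ b ∧ b ≤ C := abs_le.mp (hb x y z hx hxX hz0)
  have haa : -C'' ≤ a ∧ a ≤ C'' := abs_le.mp (hcoef x y z hx hxX hz0)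
  set s := z / (x+1) with hsdef
  have hs0 : 0 < s := by positivity
  clear_value b q a s
  have hs : 8*(C+C''+1) < s := by
    have h1 : z / (X+1) ≤ z / (x+1) := by
      apply div_le_div_of_nonneg_left hz0.le hx1
      linarith
    have h2 : 8*(C+C''+1) < z / (X+1) := by
      rw [lt_div_iff₀ (by linarith : (0:ℝ) < X+1)]
      linarith
    linarith
  have hq4 : 4*q*μ ≤ 1/4 := by
    have h1 : 4*q*μ ≤ 4*C'*μ := by nlinarith
    have h2 : 4*C'*μ ≤ 4*C'*(1/(16*C')) := by nlinarith
    have h3 : 4*C'*(1/(16*C')) = 1/4 := by field_simp; ring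
    linarith
  have hφ : 0 < phiB μ x z := exp_pos _
  have hzs : z^2/(x+1)^2 = s^2 := by rw [hsdef, div_pow]
  have hP : P1phi bt un u1 μ x y z
      = (μ*s^2 + (2*μ)*s*b - q*((4*μ^2*s^2) - 2*μ/(x+1)) - (2*μ)*s*a) * phiB μ x z := by
    rw [P1phi, pdx_phiB μ x z hx1', pdz_phiB, pdzz_phiB μ x z hx1']
    rw [← hbdef, ← hqdef, ← hadef, hsdef]
    field_simp
    ring
  have hkey : (1/2) * s^2 * μ
      ≤ μ*s^2 + (2*μ)*s*b - q*((4*μ^2*s^2) - 2*μ/(x+1)) - (2*μ)*s*a := by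
    have hms : 0 ≤ μ * s := mul_nonneg hμ.le hs0.le
    have hq1 : 0 ≤ (1/4 - 4*q*μ) * (μ * s^2) :=
      mul_nonneg (by linarith) (mul_nonneg hμ.le (sq_nonneg s))
    have hq2 : 0 ≤ 2*q*μ/(x+1) :=
      le_of_lt (div_pos (mul_pos (mul_pos two_pos hqpos) hμ) hx1)
    have hq3 : 0 ≤ (μ*s) * (C + b) := mul_nonneg hms (by linarith [hbb.1])
    have hq4' : 0 ≤ (μ*s) * (C'' - a) := mul_nonneg hms (by linarith [haa.2])
    have hq5 : 0 ≤ (μ*s) * (s - 8*(C+C'')) := mul_nonneg hms (by linarith)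
    have e : (μ*s^2 + (2*μ)*s*b - q*((4*μ^2*s^2) - 2*μ/(x+1)) - (2*μ)*s*a) - (1/2)*s^2*μ
        = (1/4 - 4*q*μ)*(μ*s^2) + 2*((μ*s)*(C+b)) + 2*((μ*s)*(C''-a))
          + (1/4)*((μ*s)*(s-8*(C+C''))) + 2*q*μ/(x+1) := by ring
    linarith [hq1, hq2, hq3, hq4', hq5, e]
  have main : (1 / 2) * (z ^ 2 / (x + 1) ^ 2) * μ * phiB μ x z ≤ P1phi bt un u1 μ x y z := by
    rw [hP, hzs]
    exact mul_le_mul_of_nonneg_right hkey hφ.le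
  refine ⟨main, lt_of_lt_of_le ?_ main⟩
  positivity
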